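/- Let G = (V, E) be a k-edge-connected graph with |V| ≥ 2 that is MinRS-disjoint. Then for any non-edge e', the graph G + e' is also MinRS-disjoint (with respect to k-edge-connectivity). -/

import Mathlib

variable {V : Type*}

/-- Reachability within `S` using edges in the edge set `E'` whose endpoints lie in `S`. -/
def ReachIn (E' : Set (V × V)) (S : Set V) : V → V → Prop :=
  Relation.ReflTransGen (fun a b => (a, b) ∈ E' ∧ a ∈ S ∧ b ∈ S)

/-- The subgraph induced by `S` with edge set `E'` is strongly connected. -/
def StrongConn (E' : Set (V × V)) (S : Set V) : Prop :=
  ∀ u ∈ S, ∀ v ∈ S, ReachIn E' S u v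

/-- `G[S]` is `k`-edge-connected: `S` is nonempty and removing any fewer than `k`
edges leaves `G[S]` strongly connected (singletons are `k`-edge-connected for all `k`). -/
def KEdgeConn (E : Set (V × V)) (k : ℕ) (S : Set V) : Prop :=
  S.Nonempty ∧ ∀ F : Finset (V × V), F.card < k → StrongConn (E \ ↑F) S

/-- `Y` is a removable set of `C` in the `k`-edge-connected system. -/
def IsRSk (E : Set (V × V)) (k : ℕ) (C Y : Set V) : Prop :=
  Y.Nonempty ∧ Y ⊆ C ∧ KEdgeConn E k (C \ Y)

/-- `Y` is a minimal removable set of `C` in the `k`-edge-connected system. -/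
def IsMinRSk (E : Set (V × V)) (k : ℕ) (C Y : Set V) : Prop :=
  IsRSk E k C Y ∧ ∀ Z, IsRSk E k C Z → Z ⊆ Y → Z = Y

/-- All MinRSs of `V` are pairwise disjoint (w.r.t. the `k`-edge-connected system). -/
def MinRSDisjK (E : Set (V × V)) (k : ℕ) : Prop :=
  ∀ Y Y', IsMinRSk E k Set.univ Y → IsMinRSk E k Set.univ Y' → Y ≠ Y' →
    Y ∩ Y' = ∅

lemma reachIn_mono {E1 E2 : Set (V × V)} {S T : Set V} (hE : E1 ⊆ E2) (hST : S ⊆ T)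
    {u v : V} (h : ReachIn E1 S u v) : ReachIn E2 T u v :=
  Relation.ReflTransGen.mono (p := fun a b => (a, b) ∈ E2 ∧ a ∈ T ∧ b ∈ T)
    (fun a b hab => ⟨hE hab.1, hST hab.2.1, hST hab.2.2⟩) u v h

lemma kEdgeConn_mono_edges {E1 E2 : Set (V × V)} {k : ℕ} {S : Set V}
    (hE : E1 ⊆ E2) (h : KEdgeConn E1 k S) : KEdgeConn E2 k S := by
  refine ⟨h.1, fun F hF u hu v hv => ?_⟩
  exact reachIn_mono (Set.diff_subset_diff_left hE) subset_rfl (h.2 F hF u hu v hv)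

lemma kEdgeConn_singleton (E' : Set (V × V)) (k : ℕ) (v : V) : KEdgeConn E' k {v} := by
  refine ⟨⟨v, rfl⟩, fun F hF u hu w hw => ?_⟩
  rw [Set.mem_singleton_iff] at hu hw
  subst hu; subst hw
  exact Relation.ReflTransGen.refl

lemma kEdgeConn_union {E' : Set (V × V)} {k : ℕ} {S T : Set V}
    (hS : KEdgeConn E' k S) (hT : KEdgeConn E' k T) (hST : (S ∩ T).Nonempty) :
    KEdgeConn E' k (S ∪ T) := by
  obtain ⟨x, hxS, hxT⟩ := hST
  refine ⟨⟨x, Or.inl hxS⟩, fun F hF u hu v hv => ?_⟩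
  have hux : ReachIn (E' \ ↑F) (S ∪ T) u x := by
    rcases hu with hu | hu
    · exact reachIn_mono subset_rfl Set.subset_union_left (hS.2 F hF u hu x hxS)
    · exact reachIn_mono subset_rfl Set.subset_union_right (hT.2 F hF u hu x hxT)
  have hxv : ReachIn (E' \ ↑F) (S ∪ T) x v := by
    rcases hv with hv | hv
    · exact reachIn_mono subset_rfl Set.subset_union_left (hS.2 F hF x hxS v hv)
    · exact reachIn_mono subset_rfl Set.subset_union_right (hT.2 F hF x hxT v hv)
  exact hux.trans hxv

lemma exists_minRS_subset [Fintype V] {E' : Set (V × V)} {k : ℕ} {Y : Set V}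
    (hY : IsRSk E' k Set.univ Y) : ∃ Z, IsMinRSk E' k Set.univ Z ∧ Z ⊆ Y := by
  classical
  have hne : {n | ∃ Z : Set V, (IsRSk E' k Set.univ Z ∧ Z ⊆ Y) ∧ Z.ncard = n}.Nonempty :=
    ⟨Y.ncard, Y, ⟨hY, subset_rfl⟩, rfl⟩
  obtain ⟨Z, hZ, hZcard⟩ := Nat.sInf_mem hne
  refine ⟨Z, ⟨hZ.1, fun W hW hWZ => ?_⟩, hZ.2⟩
  have hle : sInf {n | ∃ Z : Set V, (IsRSk E' k Set.univ Z ∧ Z ⊆ Y) ∧ Z.ncard = n} ≤ W.ncard :=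
    Nat.sInf_le ⟨W, ⟨hW, hWZ.trans hZ.2⟩, rfl⟩
  exact Set.eq_of_subset_of_ncard_le hWZ (le_trans (le_of_eq hZcard) hle) (Set.toFinite Z)

lemma two_disjoint_minRS_imp_disj [Fintype V] {E2 : Set (V × V)} {k : ℕ} {Y1 Y2 : Set V}
    (h1 : IsMinRSk E2 k Set.univ Y1) (h2 : IsMinRSk E2 k Set.univ Y2)
    (hd : Y1 ∩ Y2 = ∅) : MinRSDisjK E2 k := by
  classical
  have nonempty_compl : ∀ P : Set V, IsMinRSk E2 k Set.univ P → (Set.univ \ P).Nonempty :=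
    fun P hP => hP.1.2.2.1
  have inter_lemma : ∀ P Q : Set V, IsMinRSk E2 k Set.univ P → IsMinRSk E2 k Set.univ Q →
      (P ∩ Q).Nonempty → P ∪ Q ≠ Set.univ → P = Q := by
    intro P Q hP hQ hPQ hU
    have hC : KEdgeConn E2 k ((Set.univ \ P) ∪ (Set.univ \ Q)) := by
      apply kEdgeConn_union hP.1.2.2 hQ.1.2.2
      rw [Set.diff_inter_diff]
      obtain ⟨x, hx⟩ := Set.ne_univ_iff_exists_notMem (P ∪ Q) |>.mp hU
      exact ⟨x, Set.mem_univ x, hx⟩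
    have hRS : IsRSk E2 k Set.univ (P ∩ Q) := by
      refine ⟨hPQ, Set.subset_univ _, ?_⟩
      have hrw : Set.univ \ (P ∩ Q) = (Set.univ \ P) ∪ (Set.univ \ Q) := Set.diff_inter
      rw [hrw]; exact hC
    have e1 := hP.2 _ hRS Set.inter_subset_left
    have e2 := hQ.2 _ hRS Set.inter_subset_right
    exact e1.symm.trans e2
  have dichot : ∀ P X : Set V, IsMinRSk E2 k Set.univ P → IsMinRSk E2 k Set.univ X →
      (P ∩ X).Nonempty → P ≠ X → Set.univ \ X ⊆ P := by
    intro P X hP hX hi hnePX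
    by_cases hu : P ∪ X = Set.univ
    · intro x hx
      have hxm : x ∈ P ∪ X := by rw [hu]; exact Set.mem_univ x
      rcases hxm with h | h
      · exact h
      · exact absurd h hx.2
    · exact absurd (inter_lemma P X hP hX hi hu) hnePX
  intro A B hA hB hAB
  by_contra hcon
  have hABne : (A ∩ B).Nonempty := Set.nonempty_iff_ne_empty.mpr hcon
  by_cases hU : A ∪ B = Set.univ
  · -- the hard case: A ∪ B = univ
    have hnAB : ∀ {x : V}, x ∉ A → x ∈ B := by
      intro x hx
      have : x ∈ A ∪ B := by rw [hU]; exact Set.mem_univ x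
      rcases this with h | h
      · exact absurd h hx
      · exact h
    have hnBA : ∀ {x : V}, x ∉ B → x ∈ A := by
      intro x hx
      have : x ∈ A ∪ B := by rw [hU]; exact Set.mem_univ x
      rcases this with h | h
      · exact h
      · exact absurd h hx
    have claimC : ∀ P : Set V, IsMinRSk E2 k Set.univ P → P ≠ A → P ≠ B →
        Set.univ \ A ⊆ P ∧ Set.univ \ B ⊆ P := by
      intro P hP hPA hPB
      by_cases hPAi : (P ∩ A).Nonempty
      · have h1s := dichot P A hP hA hPAi hPA
        have hPBi : (P ∩ B).Nonempty := by
          obtain ⟨x, hx⟩ := nonempty_compl A hA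
          exact ⟨x, h1s hx, hnAB hx.2⟩
        exact ⟨h1s, dichot P B hP hB hPBi hPB⟩
      · exfalso
        have hPBi : (P ∩ B).Nonempty := by
          obtain ⟨x, hxP⟩ := hP.1.1
          have hxB : x ∈ B := by
            by_cases hxA : x ∈ A
            · exact absurd ⟨x, hxP, hxA⟩ hPAi
            · exact hnAB hxA
          exact ⟨x, hxP, hxB⟩
        have h2s := dichot P B hP hB hPBi hPB
        obtain ⟨y, hy⟩ := nonempty_compl B hB
        exact hPAi ⟨y, h2s hy, hnBA hy.2⟩
    have finish : ∀ Z W : Set V, IsMinRSk E2 k Set.univ Z → IsMinRSk E2 k Set.univ W →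
        Z ∩ W = ∅ → (Z = A ∨ Z = B) → False := by
      intro Z W hZ hW hZW hZAB
      have key : ∀ x : V, x ∈ Z → x ∈ W → False := by
        intro x hxZ hxW
        have : x ∈ Z ∩ W := ⟨hxZ, hxW⟩
        rw [hZW] at this
        exact this
      rcases hZAB with hZA | hZB
      · subst hZA
        by_cases hWA : W = Z
        · subst hWA
          obtain ⟨x, hx⟩ := hW.1.1
          exact key x hx hx
        by_cases hWB : W = B
        · subst hWB
          obtain ⟨x, hx1, hx2⟩ := hABne
          exact key x hx1 hx2
        · have hsub := (claimC W hW hWA hWB).2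
          obtain ⟨y, hy⟩ := nonempty_compl B hB
          exact key y (hnBA hy.2) (hsub hy)
      · subst hZB
        by_cases hWA : W = A
        · subst hWA
          obtain ⟨x, hx1, hx2⟩ := hABne
          exact key x hx2 hx1
        by_cases hWB : W = Z
        · subst hWB
          obtain ⟨x, hx⟩ := hW.1.1
          exact key x hx hx
        · have hsub := (claimC W hW hWA hWB).1
          obtain ⟨y, hy⟩ := nonempty_compl A hA
          exact key y (hnAB hy.2) (hsub hy)
    by_cases h1A : Y1 = A
    · exact finish Y1 Y2 h1 h2 hd (Or.inl h1A)
    by_cases h1B : Y1 = B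
    · exact finish Y1 Y2 h1 h2 hd (Or.inr h1B)
    by_cases h2A : Y2 = A
    · exact finish Y2 Y1 h2 h1 (by rw [Set.inter_comm]; exact hd) (Or.inl h2A)
    by_cases h2B : Y2 = B
    · exact finish Y2 Y1 h2 h1 (by rw [Set.inter_comm]; exact hd) (Or.inr h2B)
    · have c1 := (claimC Y1 h1 h1A h1B).1
      have c2 := (claimC Y2 h2 h2A h2B).1
      obtain ⟨x, hx⟩ := nonempty_compl A hA
      have hmem : x ∈ Y1 ∩ Y2 := ⟨c1 hx, c2 hx⟩
      rw [hd] at hmem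
      exact hmem
  · exact hAB (inter_lemma A B hA hB hABne hU)

theorem stmt_17 [Fintype V] (E : Set (V × V)) (k : ℕ)
    (hG : KEdgeConn E k Set.univ) (hcard : 2 ≤ Fintype.card V)
    (hdisj : MinRSDisjK E k)
    (e' : V × V) (he' : e' ∉ E) (hne : e'.1 ≠ e'.2) :
    MinRSDisjK (insert e' E) k := by
  classical
  have hV : Nonempty V := Fintype.card_pos_iff.mp (by omega)
  obtain ⟨v⟩ := hV
  have hRS0 : ∀ w : V, IsRSk E k Set.univ (Set.univ \ {w}) := by
    intro w
    refine ⟨?_, Set.subset_univ _, ?_⟩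
    · obtain ⟨u, hu⟩ := Fintype.exists_ne_of_one_lt_card (by omega) w
      exact ⟨u, Set.mem_univ u, by simpa using hu⟩
    · have hrw : Set.univ \ (Set.univ \ {w}) = {w} := by simp
      rw [hrw]; exact kEdgeConn_singleton E k w
  obtain ⟨Y1, hY1, _⟩ := exists_minRS_subset (hRS0 v)
  obtain ⟨w, hw⟩ := hY1.1.1
  obtain ⟨Y2, hY2, hY2sub⟩ := exists_minRS_subset (hRS0 w)
  have hne12 : Y1 ≠ Y2 := fun h => (hY2sub (h ▸ hw)).2 rfl
  have hd12 : Y1 ∩ Y2 = ∅ := hdisj Y1 Y2 hY1 hY2 hne12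
  have hEsub : E ⊆ insert e' E := Set.subset_insert e' E
  have lift : ∀ Y : Set V, IsRSk E k Set.univ Y → IsRSk (insert e' E) k Set.univ Y :=
    fun Y hY => ⟨hY.1, hY.2.1, kEdgeConn_mono_edges hEsub hY.2.2⟩
  obtain ⟨Z1, hZ1, hZ1s⟩ := exists_minRS_subset (lift Y1 hY1.1)
  obtain ⟨Z2, hZ2, hZ2s⟩ := exists_minRS_subset (lift Y2 hY2.1)
  have hdZ : Z1 ∩ Z2 = ∅ :=
    Set.subset_empty_iff.mp (hd12 ▸ Set.inter_subset_inter hZ1s hZ2s)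
  exact two_disjoint_minRS_imp_disj hZ1 hZ2 hdZ
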